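/- Let f : ℝⁿ → ℝ be continuously differentiable and strongly quasiconvex with parameter s > 0 on a convex set D ⊂ ℝⁿ. Then for all x, y ∈ D with f(x) ≤ f(y), one has ∇f(y)ᵀ(x − y) ≤ −s‖x − y‖². -/

import Mathlib

open Set

noncomputable section

/-- A function `f` is strongly quasiconvex with parameter `s > 0` on a convex set `D` if
`max {f x, f y} - f (λx + (1-λ)y) ≥ s λ (1-λ) ‖x-y‖²` for all `x, y ∈ D`, `λ ∈ [0,1]`. -/
def StronglyQuasiconvexOn {X : Type*} [NormedAddCommGroup X] [NormedSpace ℝ X]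
    (s : ℝ) (D : Set X) (f : X → ℝ) : Prop :=
  Convex ℝ D ∧ ∀ x ∈ D, ∀ y ∈ D, ∀ lam ∈ Icc (0 : ℝ) 1,
    s * lam * (1 - lam) * ‖x - y‖ ^ 2 ≤ max (f x) (f y) - f (lam • x + (1 - lam) • y)

/-- first-order property of strongly quasiconvex functions.
If `f : ℝⁿ → ℝ` is `C¹` and strongly quasiconvex with parameter `s > 0` on a convex set `D`,
then for all `x, y ∈ D` with `f x ≤ f y` one has `⟪∇f(y), x - y⟫ ≤ -s ‖x - y‖²`. -/
theorem stmt_14 {n : ℕ} (f : EuclideanSpace ℝ (Fin n) → ℝ) (hf : ContDiff ℝ 1 f)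
    (s : ℝ) (hs : 0 < s) (D : Set (EuclideanSpace ℝ (Fin n)))
    (hqc : StronglyQuasiconvexOn s D f) :
    ∀ x ∈ D, ∀ y ∈ D, f x ≤ f y →
      (inner ℝ (gradient f y) (x - y) : ℝ) ≤ -(s * ‖x - y‖ ^ 2) := by
  intro x hx y hy hfxy
  set g : ℝ → ℝ := fun t => f (y + t • (x - y)) with hg
  have hdiff : DifferentiableAt ℝ f y := (hf.differentiable one_ne_zero).differentiableAt
  -- derivative of g at 0
  have hline : HasDerivAt (fun t : ℝ => y + t • (x - y)) (x - y) 0 := by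
    have : HasDerivAt (fun t : ℝ => t • (x - y)) ((1 : ℝ) • (x - y)) 0 :=
      (hasDerivAt_id 0).smul_const (x - y)
    simpa using this.const_add y
  have hgd : HasDerivAt g ((fderiv ℝ f y) (x - y)) 0 := by
    have hfd : HasFDerivAt f (fderiv ℝ f y) (y + (0:ℝ) • (x - y)) := by
      simpa using hdiff.hasFDerivAt
    exact hfd.comp_hasDerivAt 0 hline
  have hinner : (inner ℝ (gradient f y) (x - y) : ℝ) = (fderiv ℝ f y) (x - y) := by
    rw [gradient]
    exact InnerProductSpace.toDual_symm_apply
  rw [hinner]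
  -- slope tendsto
  have hslope : Filter.Tendsto (slope g 0) (nhdsWithin 0 (Ioi 0))
      (nhds ((fderiv ℝ f y) (x - y))) :=
    (hasDerivAt_iff_tendsto_slope.mp hgd).mono_left
      (nhdsWithin_mono 0 (fun t ht => ne_of_gt ht))
  have hbound : Filter.Tendsto (fun t : ℝ => -(s * (1 - t) * ‖x - y‖ ^ 2))
      (nhdsWithin 0 (Ioi 0)) (nhds (-(s * ‖x - y‖ ^ 2))) := by
    have : Filter.Tendsto (fun t : ℝ => -(s * (1 - t) * ‖x - y‖ ^ 2)) (nhds 0)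
        (nhds (-(s * (1 - 0) * ‖x - y‖ ^ 2))) := by
      apply Filter.Tendsto.neg
      exact ((tendsto_const_nhds.sub Filter.tendsto_id).const_mul s).mul_const _
    simpa using this.mono_left nhdsWithin_le_nhds
  refine le_of_tendsto_of_tendsto hslope hbound ?_
  filter_upwards [Ioo_mem_nhdsGT_of_mem (show (0:ℝ) ∈ Ico (0:ℝ) 1 by constructor <;> norm_num)]
    with t ht
  obtain ⟨ht0, ht1⟩ := ht
  have hq := hqc.2 x hx y hy t ⟨le_of_lt ht0, le_of_lt ht1⟩
  rw [max_eq_right hfxy] at hq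
  have heq : t • x + (1 - t) • y = y + t • (x - y) := by
    module
  rw [heq] at hq
  have hg0 : g 0 = f y := by simp [hg]
  have : g t - g 0 ≤ -(s * t * (1 - t) * ‖x - y‖ ^ 2) := by
    rw [hg0]
    linarith
  have hslope_eq : slope g 0 t = (g t - g 0) / t := by
    simp [slope_def_field]
  rw [hslope_eq]
  rw [div_le_iff₀ ht0]
  nlinarith [this]
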